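/- Let M be a right k-module and E = End(M) its endomorphism ring. If every left non-zero-divisor of E is a unit of E (i.e., the right module E_E is cohopfian), then M is a cohopfian module. If the right module E_E has property (C₂) (every right ideal of E isomorphic as a right E-module to a direct summand of E_E is itself a direct summand), then M has property (C₂). -/

import Mathlib

open MulOpposite

section Aux

variable {R : Type*} [Ring R]

/-- Left multiplication as a right-module (i.e. `Rᵐᵒᵖ`-module) endomorphism of `R`. -/
def lmulR (a : R) : R →ₗ[Rᵐᵒᵖ] R where
  toFun x := a * x
  map_add' := mul_add a
  map_smul' r x := by
    simp only [MulOpposite.smul_eq_mul_unop, RingHom.id_apply, mul_assoc]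

@[simp] lemma lmulR_apply (a x : R) : lmulR a x = a * x := rfl

lemma isCompl_range_ker_of_idem {k M : Type*} [Ring k] [AddCommGroup M] [Module k M]
    (g : M →ₗ[k] M) (hg : ∀ x, g (g x) = g x) :
    IsCompl (LinearMap.range g) (LinearMap.ker g) := by
  constructor
  · rw [Submodule.disjoint_def]
    rintro x ⟨y, rfl⟩ hx
    have : g (g y) = 0 := hx
    rwa [hg] at this
  · rw [codisjoint_iff, eq_top_iff]
    intro x _
    have hx : x = g x + (x - g x) := by abel
    refine hx ▸ Submodule.add_mem_sup ⟨x, rfl⟩ ?_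
    simp [LinearMap.mem_ker, map_sub, hg]

end Aux

/-- A module is *cohopfian* if every injective endomorphism is an isomorphism. -/
def ModuleCohopfian (k M : Type*) [Ring k] [AddCommGroup M] [Module k M] : Prop :=
  ∀ f : M →ₗ[k] M, Function.Injective f → Function.Bijective f
/-- A module has property (C₂) if every submodule isomorphic to a direct summand of `M`
is itself a direct summand of `M`. -/
def ModuleC2 (k M : Type*) [Ring k] [AddCommGroup M] [Module k M] : Prop :=
  ∀ N N' : Submodule k M, (∃ C, IsCompl N' C) → Nonempty (N ≃ₗ[k] N') →
    ∃ C, IsCompl N C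
/-- The right regular module `R_R` has property (C₂): every right ideal of `R` which is
isomorphic as a right `R`-module to a direct summand of `R_R` is itself a direct summand.
Right ideals of `R` are formalized as submodules of `R` over the opposite ring `Rᵐᵒᵖ`. -/
def RightSelfC2 (R : Type*) [Ring R] : Prop :=
  ∀ I J : Submodule Rᵐᵒᵖ R, (∃ J', IsCompl J J') → Nonempty (I ≃ₗ[Rᵐᵒᵖ] J) →
    ∃ I', IsCompl I I'

/-- Lemma 8. Let `E = End(M)`.  If every left non-zero-divisor of `E` is
a unit (i.e. `E_E` is cohopfian), then `M` is cohopfian; and if `E_E` has property (C₂),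
then `M` has property (C₂). -/
theorem end_cohopfian_c2_transfer
    (k M : Type*) [Ring k] [AddCommGroup M] [Module k M] :
    ((∀ w : Module.End k M, (∀ r : Module.End k M, w * r = 0 → r = 0) → IsUnit w) →
        ModuleCohopfian k M) ∧
      (RightSelfC2 (Module.End k M) → ModuleC2 k M) := by
  constructor
  · -- cohopfian part
    intro h f hf
    have hu : IsUnit f := by
      refine h f fun r hr => ?_
      ext m
      have : f (r m) = 0 := congrFun (congrArg DFunLike.coe hr) m
      exact hf (by simpa using this)
    obtain ⟨u, hu⟩ := hu
    refine ⟨hf, fun m => ⟨(↑u⁻¹ : Module.End k M) m, ?_⟩⟩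
    have := congrFun (congrArg DFunLike.coe u.mul_inv) m
    rw [Module.End.mul_apply] at this
    rw [hu] at this
    simpa using this
  · -- C₂ part
    intro hC2 N N' hNC hiso0
    obtain ⟨C, hc⟩ := hNC
    obtain ⟨φ⟩ := hiso0
    set E := Module.End k M with hE
    -- projection onto N' along C, as an endomorphism e
    set p : M →ₗ[k] N' := N'.linearProjOfIsCompl C hc with hp
    set e : E := N'.subtype ∘ₗ p with he
    set α : E := N.subtype ∘ₗ (φ.symm : N' →ₗ[k] N) ∘ₗ p with hα
    have hem : ∀ m : M, e m = ((p m : N') : M) := fun m => rfl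
    have hαm : ∀ m : M, α m = ((φ.symm (p m) : N) : M) := fun m => rfl
    have hpe : ∀ m : M, p (e m) = p m := fun m =>
      Submodule.linearProjOfIsCompl_apply_left hc (p m)
    have he2 : e * e = e := by
      ext m
      show ((p (e m) : N') : M) = ((p m : N') : M)
      rw [hpe]
    have hαe : α * e = α := by
      ext m
      show ((φ.symm (p (e m)) : N) : M) = ((φ.symm (p m) : N) : M)
      rw [hpe]
    have hcancel : ∀ f : E, α * f = 0 → e * f = 0 := by
      intro f hf
      ext m
      have h0 : α (f m) = 0 := congrFun (congrArg DFunLike.coe hf) m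
      rw [hαm] at h0
      have h1 : φ.symm (p (f m)) = 0 := Subtype.ext (by simpa using h0)
      have h2 : p (f m) = 0 := by
        have := congrArg φ h1
        simpa using this
      show ((p (f m) : N') : M) = (0 : M)
      rw [h2]; rfl
    have hrange : LinearMap.range α = N := by
      apply le_antisymm
      · rintro x ⟨m, rfl⟩
        rw [hαm]
        exact (φ.symm (p m) : N).2
      · intro n hn
        refine ⟨((φ ⟨n, hn⟩ : N') : M), ?_⟩
        rw [hαm]
        have h3 : p ((φ ⟨n, hn⟩ : N') : M) = φ ⟨n, hn⟩ :=
          Submodule.linearProjOfIsCompl_apply_left hc _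
        rw [h3]
        simp
    -- right ideals αE and eE
    set I : Submodule Eᵐᵒᵖ E := LinearMap.range (lmulR α) with hI
    set J : Submodule Eᵐᵒᵖ E := LinearMap.range (lmulR e) with hJ
    -- J is a direct summand of E_E
    have hJc : ∃ J', IsCompl J J' := by
      refine ⟨LinearMap.range (lmulR (1 - e)), ?_⟩
      constructor
      · rw [Submodule.disjoint_def]
        rintro x ⟨a, rfl⟩ ⟨b, hb⟩
        have h4 : e * ((1 - e) * b) = 0 := by
          rw [← mul_assoc, mul_sub, mul_one, he2, sub_self, zero_mul]
        have hb' : (1 - e) * b = e * a := hb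
        calc (lmulR e) a = e * (e * a) := by rw [← mul_assoc, he2]; rfl
          _ = e * ((1 - e) * b) := by rw [hb']
          _ = 0 := h4
      · rw [codisjoint_iff, eq_top_iff]
        intro x _
        have hx : x = e * x + (1 - e) * x := by rw [sub_mul, one_mul]; abel
        exact hx ▸ Submodule.add_mem_sup ⟨x, rfl⟩ ⟨x, rfl⟩
    -- I ≅ J as right E-modules
    have hiso : Nonempty (I ≃ₗ[Eᵐᵒᵖ] J) := by
      refine ⟨(LinearEquiv.ofBijective ?_ ?_).symm⟩
      · exact
          { toFun := fun y => ⟨α * (y : E), ⟨(y : E), rfl⟩⟩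
            map_add' := fun y z => by
              ext; simp [mul_add]
            map_smul' := fun r y => by
              ext
              simp [MulOpposite.smul_eq_mul_unop, mul_assoc] }
      · constructor
        · rintro ⟨y, a, rfl⟩ ⟨z, b, rfl⟩ hyz
          have h0 : α * (e * a) = α * (e * b) := congrArg Subtype.val hyz
          have h0' : α * (e * a - e * b) = 0 := by
            rw [mul_sub, h0, sub_self]
          have h1 : e * (e * a - e * b) = 0 := hcancel _ h0'
          have h5 : e * a - e * b = 0 := by
            rwa [mul_sub, ← mul_assoc, ← mul_assoc, he2] at h1
          exact Subtype.ext (show e * a = e * b by rwa [sub_eq_zero] at h5)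
        · rintro ⟨x, a, rfl⟩
          refine ⟨⟨e * a, ⟨a, rfl⟩⟩, ?_⟩
          apply Subtype.ext
          show α * (e * a) = α * a
          rw [← mul_assoc, hαe]
    obtain ⟨I', hI'⟩ := hC2 I J hJc hiso
    -- extract idempotent generator g of I
    obtain ⟨g, gh, hg, hgh, h1gh⟩ :=
      Submodule.codisjoint_iff_exists_add_eq.mp hI'.2 1
    have hdis := hI'.1
    rw [Submodule.disjoint_def] at hdis
    have hghI : g * gh ∈ I := I.smul_mem (op gh) hg
    have hghI' : g * gh ∈ I' := by
      have hgeq : g = 1 - gh := eq_sub_of_add_eq h1gh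
      have : g * gh = gh - gh * gh := by rw [hgeq, sub_mul, one_mul]
      rw [this]
      exact I'.sub_mem hgh (I'.smul_mem (op gh) hgh)
    have hgh0 : g * gh = 0 := hdis _ hghI hghI'
    have hgidem : g * g = g := by
      have : g * g + g * gh = g := by rw [← mul_add, h1gh, mul_one]
      rwa [hgh0, add_zero] at this
    -- every x ∈ I satisfies g * x = x
    have hgen : ∀ x ∈ I, g * x = x := by
      intro x hx
      have h1 : gh * x ∈ I' := I'.smul_mem (op x) hgh
      have h2 : gh * x ∈ I := by
        have hgheq : gh = 1 - g := eq_sub_of_add_eq (by rwa [add_comm] at h1gh)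
        have : gh * x = x - g * x := by rw [hgheq, sub_mul, one_mul]
        rw [this]
        exact I.sub_mem hx (I.smul_mem (op x) hg)
      have h6 := hdis _ h2 h1
      have hx' : x = g * x + gh * x := by rw [← add_mul, h1gh, one_mul]
      rw [h6, add_zero] at hx'
      exact hx'.symm
    obtain ⟨s, hs⟩ := hg
    have hαg : g * α = α := hgen α ⟨1, mul_one α⟩
    have hrg : LinearMap.range g = N := by
      apply le_antisymm
      · rw [← hrange]
        rintro x ⟨m, rfl⟩
        rw [← hs]
        exact ⟨s m, rfl⟩
      · rw [← hrange]
        rintro x ⟨m, rfl⟩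
        exact ⟨α m, congrFun (congrArg DFunLike.coe hαg) m⟩
    refine ⟨LinearMap.ker g, ?_⟩
    rw [← hrg]
    exact isCompl_range_ker_of_idem g fun x => congrFun (congrArg DFunLike.coe hgidem) x
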